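/- If T is an aperiodic homeomorphism of a Cantor set X, then the map ℓ ↦ h_{T,ℓ} (where h_{T,ℓ}(x) = T^{ℓ(x)}(x)) restricts to a group isomorphism from the group of invertible elements of the monoid (C(X,ℤ), ⊕_T) onto the topological full group [[T]]. -/

import Mathlib

/-- `h_{T,ℓ} (x) = T^{ℓ(x)}(x)`. -/
def hTl {X : Type*} (T : Equiv.Perm X) (ℓ : X → ℤ) : X → X :=
  fun x => (T ^ ℓ x) x

/-- `(ℓ₁ ⊕_T ℓ₂)(x) = ℓ₁(T^{ℓ₂(x)}(x)) + ℓ₂(x)`. -/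
def oplus {X : Type*} (T : Equiv.Perm X) (ℓ₁ ℓ₂ : X → ℤ) : X → ℤ :=
  fun x => ℓ₁ (hTl T ℓ₂ x) + ℓ₂ x

/-- `ℓ` is an invertible element of the monoid `(C(X,ℤ), ⊕_T)`. -/
def IsOplusInvertible {X : Type*} [TopologicalSpace X] (T : Equiv.Perm X)
    (ℓ : X → ℤ) : Prop :=
  Continuous ℓ ∧ ∃ ℓ' : X → ℤ, Continuous ℓ' ∧
    oplus T ℓ ℓ' = (fun _ => 0) ∧ oplus T ℓ' ℓ = (fun _ => 0)

/-- The topological full group `[[T]]` of a homeomorphism `T` of a Cantor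
set. -/
def TFG {X : Type*} [TopologicalSpace X] (T : X ≃ₜ X) : Set (X ≃ₜ X) :=
  {F | ∃ ν : X → ℤ, Continuous ν ∧ ∀ x, F x = (T.toEquiv ^ ν x) x}


private lemma cont_zpow {X : Type*} [TopologicalSpace X] (T : X ≃ₜ X) (n : ℤ) :
    Continuous fun x => (T.toEquiv ^ n) x := by
  have key : ∀ (S : X ≃ₜ X) (m : ℕ), Continuous fun x => (S.toEquiv ^ m) x := by
    intro S m
    induction m with
    | zero => simpa using continuous_id'
    | succ n ih =>
      have : (fun x => (S.toEquiv ^ (n+1)) x) = fun x => (S.toEquiv ^ n) (S x) := by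
        funext x; rw [pow_succ, Equiv.Perm.mul_apply]; rfl
      rw [this]; exact ih.comp S.continuous
  obtain ⟨m, rfl | rfl⟩ := Int.eq_nat_or_neg n
  · simpa [zpow_natCast] using key T m
  · have : T.toEquiv ^ (-(m:ℤ)) = T.symm.toEquiv ^ m := by
      rw [zpow_neg, zpow_natCast, ← inv_pow]; rfl
    rw [this]; exact key T.symm m

private lemma cont_hTl {X : Type*} [TopologicalSpace X] (T : X ≃ₜ X) {ℓ : X → ℤ}
    (hℓ : Continuous ℓ) : Continuous (hTl T.toEquiv ℓ) := by
  rw [continuous_iff_continuousAt]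
  intro x
  have hlc : IsLocallyConstant ℓ := (IsLocallyConstant.iff_continuous ℓ).2 hℓ
  have hU : ∀ᶠ y in nhds x, ℓ y = ℓ x := hlc.eventually_eq x
  have : ∀ᶠ y in nhds x, (fun z => (T.toEquiv ^ ℓ x) z) y = hTl T.toEquiv ℓ y := by
    filter_upwards [hU] with y hy
    simp [hTl, hy]
  exact ContinuousAt.congr ((cont_zpow T (ℓ x)).continuousAt) this

private lemma zpow_add_apply {X : Type*} (T : Equiv.Perm X) (a b : ℤ) (x : X) :
    (T ^ (a + b)) x = (T ^ a) ((T ^ b) x) := by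
  rw [zpow_add, Equiv.Perm.mul_apply]

/-- For an aperiodic homeomorphism `T` of a Cantor set `X`, the map
`ℓ ↦ h_{T,ℓ}` restricts to a group isomorphism from the group of invertible
elements of the monoid `(C(X,ℤ), ⊕_T)` onto the topological full group
`[[T]]`: it maps invertible elements to elements of `[[T]]`, is injective,
multiplicative, and surjective onto `[[T]]`. -/
theorem tfg_model_isomorphism {X : Type*} [TopologicalSpace X] [CompactSpace X]
    [TopologicalSpace.MetrizableSpace X] [TotallyDisconnectedSpace X]
    [Nonempty X] (hperf : ∀ x : X, ¬ IsOpen ({x} : Set X))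
    (T : X ≃ₜ X)
    (hap : ∀ (x : X) (n : ℕ), 1 ≤ n → (T.toEquiv ^ (n : ℤ)) x ≠ x) :
    (∀ ℓ : X → ℤ, IsOplusInvertible T.toEquiv ℓ →
      ∃ F : X ≃ₜ X, F ∈ TFG T ∧ ∀ x, F x = hTl T.toEquiv ℓ x) ∧
    (∀ ℓ₁ ℓ₂ : X → ℤ, IsOplusInvertible T.toEquiv ℓ₁ →
      IsOplusInvertible T.toEquiv ℓ₂ →
      hTl T.toEquiv ℓ₁ = hTl T.toEquiv ℓ₂ → ℓ₁ = ℓ₂) ∧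
    (∀ ℓ₁ ℓ₂ : X → ℤ, IsOplusInvertible T.toEquiv ℓ₁ →
      IsOplusInvertible T.toEquiv ℓ₂ →
      hTl T.toEquiv (oplus T.toEquiv ℓ₁ ℓ₂) =
        hTl T.toEquiv ℓ₁ ∘ hTl T.toEquiv ℓ₂) ∧
    (∀ F ∈ TFG T, ∃ ℓ : X → ℤ, IsOplusInvertible T.toEquiv ℓ ∧
      ∀ x, F x = hTl T.toEquiv ℓ x) := by
  -- aperiodicity for all integers
  have hap' : ∀ (x : X) (k : ℤ), (T.toEquiv ^ k) x = x → k = 0 := by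
    intro x k hk
    rcases lt_trichotomy k 0 with hneg | h0 | hpos
    · exfalso
      have hx : (T.toEquiv ^ (-k)) x = (T.toEquiv ^ (-k)) ((T.toEquiv ^ k) x) := by rw [hk]
      rw [← zpow_add_apply, neg_add_cancel, zpow_zero, Equiv.Perm.one_apply] at hx
      have : 1 ≤ (-k).toNat := by omega
      exact hap x (-k).toNat this (by rw [Int.toNat_of_nonneg (by omega)]; exact hx)
    · exact h0
    · exfalso
      have : 1 ≤ k.toNat := by omega
      exact hap x k.toNat this (by rw [Int.toNat_of_nonneg (by omega)]; exact hk)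
  refine ⟨?_, ?_, ?_, ?_⟩
  · -- membership
    rintro ℓ ⟨hℓ, ℓ', hℓ', hll', hl'l⟩
    have hinv1 : ∀ x, hTl T.toEquiv ℓ (hTl T.toEquiv ℓ' x) = x := by
      intro x
      have := congrFun hll' x
      simp only [oplus] at this
      show (T.toEquiv ^ ℓ (hTl T.toEquiv ℓ' x)) ((T.toEquiv ^ ℓ' x) x) = x
      rw [← zpow_add_apply, this, zpow_zero, Equiv.Perm.one_apply]
    have hinv2 : ∀ x, hTl T.toEquiv ℓ' (hTl T.toEquiv ℓ x) = x := by
      intro x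
      have := congrFun hl'l x
      simp only [oplus] at this
      show (T.toEquiv ^ ℓ' (hTl T.toEquiv ℓ x)) ((T.toEquiv ^ ℓ x) x) = x
      rw [← zpow_add_apply, this, zpow_zero, Equiv.Perm.one_apply]
    refine ⟨⟨⟨hTl T.toEquiv ℓ, hTl T.toEquiv ℓ', hinv2, hinv1⟩,
        cont_hTl T hℓ, cont_hTl T hℓ'⟩, ⟨ℓ, hℓ, fun x => rfl⟩, fun x => rfl⟩
  · -- injectivity
    rintro ℓ₁ ℓ₂ _ _ h
    funext x
    have hx := congrFun h x
    simp only [hTl] at hx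
    have : (T.toEquiv ^ (ℓ₁ x - ℓ₂ x)) x = x := by
      have h2 := congrArg (fun y => (T.toEquiv ^ (-ℓ₂ x)) y) hx
      simp only [← zpow_add_apply] at h2
      rw [neg_add_cancel, zpow_zero, Equiv.Perm.one_apply] at h2
      rw [show ℓ₁ x - ℓ₂ x = -ℓ₂ x + ℓ₁ x by ring]
      exact h2
    have := hap' x _ this
    omega
  · -- multiplicativity
    rintro ℓ₁ ℓ₂ _ _
    funext x
    simp only [hTl, oplus, Function.comp_apply, hTl]
    rw [zpow_add_apply]
  · -- surjectivity
    rintro F ⟨ν, hν, hFν⟩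
    refine ⟨ν, ⟨hν, fun x => -ν (F.symm x), (hν.comp F.symm.continuous).neg, ?_, ?_⟩,
      fun x => hFν x⟩
    · funext x
      have hx : hTl T.toEquiv (fun x => -ν (F.symm x)) x = F.symm x := by
        have h1 : F (F.symm x) = x := F.apply_symm_apply x
        rw [hFν] at h1
        show (T.toEquiv ^ (-ν (F.symm x))) x = F.symm x
        have h2 : (T.toEquiv ^ (-ν (F.symm x))) ((T.toEquiv ^ ν (F.symm x)) (F.symm x))
            = F.symm x := by
          rw [← zpow_add_apply, neg_add_cancel, zpow_zero, Equiv.Perm.one_apply]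
        rw [h1] at h2
        exact h2
      simp only [oplus, hx]
      omega
    · funext x
      have hx : hTl T.toEquiv ν x = F x := (hFν x).symm
      simp only [oplus, hx, F.symm_apply_apply]
      omega
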